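/- (Expected number of k-records of a random permutation, used in Proposition on finding the k smallest elements.) For all integers n ≥ 1 and k ≥ 1, Σ_{σ ∈ S_n} |{ j ∈ {1, …, n} : |{ i < j : σ(i) < σ(j) }| < k }| = n! · Σ_{j=1}^n min(k, j)/j. Consequently, the expected number of such indices for a uniformly random permutation of {1, …, n} is at most k·(1 + ln n). -/
import Mathlib

open Finset Equiv

variable {α : Type*} [LinearOrder α]

lemma aux_card_filter_lt (S : Finset α) {m : ℕ} (h : S.card = m) (i : Fin m) :
    (S.filter (· < S.orderEmbOfFin h i)).card = i := by
  have himg : S.filter (· < S.orderEmbOfFin h i)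
      = (univ.filter (· < i)).image (S.orderEmbOfFin h) := by
    ext x
    simp only [mem_filter, mem_image, mem_univ, true_and]
    constructor
    · rintro ⟨hx, hlt⟩
      have : x ∈ Set.range (S.orderEmbOfFin h) := by
        rw [range_orderEmbOfFin]; exact hx
      obtain ⟨m', rfl⟩ := this
      exact ⟨m', (OrderEmbedding.lt_iff_lt _).1 hlt, rfl⟩
    · rintro ⟨m', hm', rfl⟩
      exact ⟨orderEmbOfFin_mem _ _ _, (OrderEmbedding.lt_iff_lt _).2 hm'⟩
  rw [himg, card_image_of_injective _ (S.orderEmbOfFin h).injective]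
  have : (univ.filter (· < i) : Finset (Fin m)) = Finset.Iio i := by
    ext x; simp
  rw [this, Fin.card_Iio]

lemma aux_orderEmb_eq {S : Finset α} {m : ℕ} (h : S.card = m) {x : α} (hx : x ∈ S)
    {c : ℕ} (hc : c < m) (hcard : (S.filter (· < x)).card = c) :
    S.orderEmbOfFin h ⟨c, hc⟩ = x := by
  have : x ∈ Set.range (S.orderEmbOfFin h) := by rw [range_orderEmbOfFin]; exact hx
  obtain ⟨m', rfl⟩ := this
  symm; congr 1; symm
  have := aux_card_filter_lt S h m'
  rw [hcard] at this
  exact Fin.ext this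

lemma aux_orderEmb_congr {S S' : Finset α} (hSS : S = S') {m : ℕ} (h : S.card = m)
    (h' : S'.card = m) (i : Fin m) : S.orderEmbOfFin h i = S'.orderEmbOfFin h' i := by
  subst hSS; rfl

/-- The number of indices `i < j` with `σ i < σ j`. -/
def rk (n : ℕ) (j : Fin n) (σ : Equiv.Perm (Fin n)) : ℕ :=
  (univ.filter fun i : Fin n => i < j ∧ σ i < σ j).card

lemma S_card (n : ℕ) (j : Fin n) (σ : Equiv.Perm (Fin n)) :
    ((Iic j).image σ).card = (j : ℕ) + 1 := by
  rw [card_image_of_injective _ σ.injective, Fin.card_Iic]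

lemma rk_eq (n : ℕ) (j : Fin n) (σ : Equiv.Perm (Fin n)) :
    rk n j σ = (((Iic j).image σ).filter (· < σ j)).card := by
  unfold rk
  have h1 : (univ.filter fun i : Fin n => i < j ∧ σ i < σ j)
      = (Iic j).filter fun i => σ i < σ j := by
    ext i
    simp only [mem_filter, mem_univ, true_and, mem_Iic]
    constructor
    · rintro ⟨h1, h2⟩; exact ⟨h1.le, h2⟩
    · rintro ⟨h1, h2⟩
      refine ⟨lt_of_le_of_ne h1 fun hij => ?_, h2⟩
      subst hij; exact lt_irrefl _ h2
  rw [h1, filter_image, card_image_of_injective _ σ.injective]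

lemma rk_le (n : ℕ) (j : Fin n) (σ : Equiv.Perm (Fin n)) : rk n j σ ≤ (j : ℕ) := by
  have hsub : (univ.filter fun i : Fin n => i < j ∧ σ i < σ j) ⊆ Finset.Iio j := by
    intro i hi
    simp only [mem_filter] at hi
    exact Finset.mem_Iio.2 hi.2.1
  calc rk n j σ ≤ (Finset.Iio j).card := card_le_card hsub
    _ = (j : ℕ) := Fin.card_Iio j

/-- Swap `σ j` with the element of rank `c` among the first `j+1` values. -/
def Fmap (n : ℕ) (j : Fin n) (c : ℕ) (σ : Equiv.Perm (Fin n)) : Equiv.Perm (Fin n) :=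
  Equiv.swap (σ j) (((Iic j).image σ).orderEmbOfFin (S_card n j σ)
    ⟨c % ((j : ℕ) + 1), Nat.mod_lt _ (Nat.succ_pos _)⟩) * σ

lemma S_Fmap (n : ℕ) (j : Fin n) (c : ℕ) (σ : Equiv.Perm (Fin n)) :
    (Iic j).image (Fmap n j c σ) = (Iic j).image σ := by
  set S := (Iic j).image σ with hS
  set b := S.orderEmbOfFin (S_card n j σ)
    ⟨c % ((j : ℕ) + 1), Nat.mod_lt _ (Nat.succ_pos _)⟩ with hb
  have hbS : b ∈ S := orderEmbOfFin_mem _ _ _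
  have haS : σ j ∈ S := mem_image_of_mem σ (mem_Iic.2 le_rfl)
  have h1 : (Iic j).image (Fmap n j c σ) = S.image (Equiv.swap (σ j) b) := by
    rw [hS, image_image]
    rfl
  rw [h1]
  have hsub : S.image (Equiv.swap (σ j) b) ⊆ S := by
    intro x hx
    simp only [mem_image] at hx
    obtain ⟨y, hy, rfl⟩ := hx
    rcases eq_or_ne y (σ j) with rfl | h1
    · rw [Equiv.swap_apply_left]; exact hbS
    rcases eq_or_ne y b with rfl | h2
    · rw [Equiv.swap_apply_right]; exact haS
    · rw [Equiv.swap_apply_of_ne_of_ne h1 h2]; exact hy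
  refine (Finset.eq_of_subset_of_card_le hsub ?_)
  rw [card_image_of_injective _ (Equiv.swap (σ j) b).injective]

lemma Fmap_apply_j (n : ℕ) (j : Fin n) (c : ℕ) (σ : Equiv.Perm (Fin n)) :
    Fmap n j c σ j = ((Iic j).image σ).orderEmbOfFin (S_card n j σ)
      ⟨c % ((j : ℕ) + 1), Nat.mod_lt _ (Nat.succ_pos _)⟩ := by
  simp [Fmap, Equiv.swap_apply_left]

lemma rk_Fmap (n : ℕ) (j : Fin n) {c : ℕ} (hc : c ≤ (j : ℕ)) (σ : Equiv.Perm (Fin n)) :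
    rk n j (Fmap n j c σ) = c := by
  rw [rk_eq, S_Fmap, Fmap_apply_j,
    aux_card_filter_lt ((Iic j).image σ) (S_card n j σ) _]
  exact Nat.mod_eq_of_lt (by omega)

lemma Fmap_Fmap (n : ℕ) (j : Fin n) {c c' : ℕ} (hc : c ≤ (j : ℕ)) (hc' : c' ≤ (j : ℕ))
    (σ : Equiv.Perm (Fin n)) (hA : rk n j σ = c) :
    Fmap n j c (Fmap n j c' σ) = σ := by
  set τ := Fmap n j c' σ with hτ
  set S := (Iic j).image σ with hS
  set b' := S.orderEmbOfFin (S_card n j σ)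
    ⟨c' % ((j : ℕ) + 1), Nat.mod_lt _ (Nat.succ_pos _)⟩ with hb'
  have hτj : τ j = b' := Fmap_apply_j n j c' σ
  have hcm : c % ((j : ℕ) + 1) = c := Nat.mod_eq_of_lt (by omega)
  have hbb : ((Iic j).image τ).orderEmbOfFin (S_card n j τ)
      ⟨c % ((j : ℕ) + 1), Nat.mod_lt _ (Nat.succ_pos _)⟩ = σ j := by
    rw [aux_orderEmb_congr (S_Fmap n j c' σ) (S_card n j τ) (S_card n j σ)]
    exact aux_orderEmb_eq (S_card n j σ) (mem_image_of_mem σ (mem_Iic.2 le_rfl))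
      (by omega) (by rw [← rk_eq]; simpa [hcm] using hA)
  show Equiv.swap (τ j) _ * τ = σ
  rw [hbb, hτj, hτ]
  show Equiv.swap b' (σ j) * (Equiv.swap (σ j) _ * σ) = σ
  rw [← hb', Equiv.swap_comm, ← mul_assoc, Equiv.swap_mul_self, one_mul]

lemma class_eq (n : ℕ) (j : Fin n) {c c' : ℕ} (hc : c ≤ (j : ℕ)) (hc' : c' ≤ (j : ℕ)) :
    (univ.filter fun σ : Equiv.Perm (Fin n) => rk n j σ = c).card
      = (univ.filter fun σ : Equiv.Perm (Fin n) => rk n j σ = c').card := by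
  refine Finset.card_bij' (fun σ _ => Fmap n j c' σ) (fun σ _ => Fmap n j c σ) ?_ ?_ ?_ ?_
  · intro σ _; simp [rk_Fmap n j hc']
  · intro σ _; simp [rk_Fmap n j hc]
  · intro σ hσ
    simp only [mem_filter, mem_univ, true_and] at hσ
    exact Fmap_Fmap n j hc hc' σ hσ
  · intro σ hσ
    simp only [mem_filter, mem_univ, true_and] at hσ
    exact Fmap_Fmap n j hc' hc σ hσ

lemma class_sum (n : ℕ) (j : Fin n) :
    ∑ c ∈ range ((j : ℕ) + 1),
      (univ.filter fun σ : Equiv.Perm (Fin n) => rk n j σ = c).card = n.factorial := by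
  rw [← Finset.card_eq_sum_card_fiberwise (f := rk n j)
      (fun σ _ => mem_range.2 (Nat.lt_succ_of_le (rk_le n j σ)))]
  simp [Fintype.card_perm]

lemma class_card (n : ℕ) (j : Fin n) {c : ℕ} (hc : c ≤ (j : ℕ)) :
    (univ.filter fun σ : Equiv.Perm (Fin n) => rk n j σ = c).card * ((j : ℕ) + 1)
      = n.factorial := by
  have h1 : ∑ c' ∈ range ((j : ℕ) + 1),
      (univ.filter fun σ : Equiv.Perm (Fin n) => rk n j σ = c).card = n.factorial := by
    rw [← class_sum n j]
    exact Finset.sum_congr rfl fun c' hc' =>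
      class_eq n j hc (Nat.lt_succ_iff.1 (mem_range.1 hc'))
  rw [Finset.sum_const, card_range, smul_eq_mul, mul_comm] at h1
  exact h1

lemma count_lt (n k : ℕ) (j : Fin n) :
    (univ.filter fun σ : Equiv.Perm (Fin n) => rk n j σ < k).card * ((j : ℕ) + 1)
      = min k ((j : ℕ) + 1) * n.factorial := by
  have h1 : (univ.filter fun σ : Equiv.Perm (Fin n) => rk n j σ < k).card
      = ∑ c ∈ range (min k ((j : ℕ) + 1)),
        (univ.filter fun σ : Equiv.Perm (Fin n) => rk n j σ = c).card := by
    rw [Finset.card_eq_sum_card_fiberwise (f := rk n j)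
        (t := range (min k ((j : ℕ) + 1)))
        (fun σ hσ => mem_range.2 (lt_min (mem_filter.1 hσ).2
          (Nat.lt_succ_of_le (rk_le n j σ))))]
    refine Finset.sum_congr rfl fun c hc => ?_
    rw [Finset.filter_filter]
    congr 1
    refine Finset.filter_congr fun σ _ => ?_
    have := mem_range.1 hc
    constructor
    · rintro ⟨_, h⟩; exact h
    · rintro h; exact ⟨by omega, h⟩
  rw [h1, Finset.sum_mul]
  have h2 : ∀ c ∈ range (min k ((j : ℕ) + 1)),
      (univ.filter fun σ : Equiv.Perm (Fin n) => rk n j σ = c).card * ((j : ℕ) + 1)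
        = n.factorial := fun c hc =>
    class_card n j (by have := mem_range.1 hc; omega)
  rw [Finset.sum_congr rfl h2, Finset.sum_const, card_range, smul_eq_mul]

lemma count_real (n k : ℕ) (j : Fin n) :
    ((univ.filter fun σ : Equiv.Perm (Fin n) => rk n j σ < k).card : ℝ)
      = ((min k ((j : ℕ) + 1) : ℕ) : ℝ) * (n.factorial : ℝ) / ((j : ℕ) + 1) := by
  have hj : ((j : ℝ) + 1) ≠ 0 := by positivity
  rw [eq_div_iff hj]
  exact_mod_cast count_lt n k j

/-- **Expected number of k-records of a random permutation.**  An index `j` is a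
`k`-record of `σ` if `σ j` is among the `k` smallest of `σ 1, …, σ j`, i.e. if fewer than
`k` indices `i < j` have `σ i < σ j`.  The total number of `k`-records over all
permutations of an `n`-element set is `n! · Σ_{j=1}^n min(k, j)/j`; consequently the
expected number of `k`-records of a uniformly random permutation is at most
`k·(1 + ln n)`. -/
theorem stmt10 (n k : ℕ) (hn : 1 ≤ n) (hk : 1 ≤ k) :
    (∑ σ : Equiv.Perm (Fin n),
        ((Finset.univ.filter fun j : Fin n =>
            (Finset.univ.filter fun i : Fin n => i < j ∧ σ i < σ j).card < k).card : ℝ))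
      = (Nat.factorial n : ℝ) * ∑ j ∈ Finset.Icc 1 n, (min k j : ℝ) / j ∧
    (∑ σ : Equiv.Perm (Fin n),
        ((Finset.univ.filter fun j : Fin n =>
            (Finset.univ.filter fun i : Fin n => i < j ∧ σ i < σ j).card < k).card : ℝ))
        / (Nat.factorial n : ℝ)
      ≤ k * (1 + Real.log n) := by
  have heq : (∑ σ : Equiv.Perm (Fin n),
        ((Finset.univ.filter fun j : Fin n =>
            (Finset.univ.filter fun i : Fin n => i < j ∧ σ i < σ j).card < k).card : ℝ))
      = (Nat.factorial n : ℝ) * ∑ j ∈ Finset.Icc 1 n, (min k j : ℝ) / j := by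
    have hswap : (∑ σ : Equiv.Perm (Fin n),
          ((Finset.univ.filter fun j : Fin n => rk n j σ < k).card : ℝ))
        = ∑ j : Fin n,
            ((univ.filter fun σ : Equiv.Perm (Fin n) => rk n j σ < k).card : ℝ) := by
      simp_rw [Finset.card_filter]
      push_cast
      exact Finset.sum_comm
    rw [show (∑ σ : Equiv.Perm (Fin n),
        ((Finset.univ.filter fun j : Fin n =>
            (Finset.univ.filter fun i : Fin n => i < j ∧ σ i < σ j).card < k).card : ℝ))
      = (∑ σ : Equiv.Perm (Fin n),
          ((Finset.univ.filter fun j : Fin n => rk n j σ < k).card : ℝ)) from rfl, hswap]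
    rw [Finset.sum_congr rfl fun (j : Fin n) _ => count_real n k j]
    rw [Fin.sum_univ_eq_sum_range
      (fun i => ((min k (i + 1) : ℕ) : ℝ) * (n.factorial : ℝ) / ((i : ℝ) + 1)) n,
      ← Finset.Ico_add_one_right_eq_Icc, Finset.sum_Ico_eq_sum_range]
    norm_num
    rw [Finset.mul_sum]
    refine Finset.sum_congr rfl fun i _ => ?_
    rw [add_comm (1:ℝ) (i:ℝ)]
    ring
  refine ⟨heq, ?_⟩
  rw [heq]
  have hfac : (0 : ℝ) < (n.factorial : ℝ) := by
    exact_mod_cast n.factorial_pos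
  rw [mul_div_cancel_left₀ _ hfac.ne']
  calc ∑ j ∈ Finset.Icc 1 n, (min k j : ℝ) / j
      ≤ ∑ j ∈ Finset.Icc 1 n, (k : ℝ) * ((j : ℝ))⁻¹ := by
        refine Finset.sum_le_sum fun j hj => ?_
        have hj1 : 1 ≤ j := (Finset.mem_Icc.1 hj).1
        have hjpos : (0 : ℝ) < (j : ℝ) := by exact_mod_cast hj1
        rw [div_eq_mul_inv]
        exact mul_le_mul_of_nonneg_right (min_le_left _ _) (by positivity)
    _ = (k : ℝ) * ∑ j ∈ Finset.Icc 1 n, ((j : ℝ))⁻¹ := (Finset.mul_sum _ _ _).symm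
    _ = (k : ℝ) * ((harmonic n : ℚ) : ℝ) := by
        congr 1
        rw [harmonic_eq_sum_Icc]
        push_cast
        rfl
    _ ≤ (k : ℝ) * (1 + Real.log n) :=
        mul_le_mul_of_nonneg_left (harmonic_le_one_add_log n) (by positivity)
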